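/- arXiv:2302.11829 — 3 statements merged into one kernel-verified Lean document; each statement's English description precedes it below -/
import Mathlib

section
/- Assume n ≥ 2, M_{{1}} ≤ M_{{2}}, and min_{x∈Δ_m} u^L(x,2) < M_{{1}}. Then the set {x ∈ Δ_m : u^L(x,2) ≥ M_{{1,2}}} is nonempty and max{ u^L(x,1) : x ∈ Δ_m, u^L(x,2) ≥ M_{{1,2}} } = M_{{1,2}}; moreover max{ u^L(x,2) : x ∈ Δ_m, u^L(x,2) ≤ M_{{1,2}} } = M_{{1,2}}, and there exists x ∈ Δ_m with u^L(x,2) < M_{{1,2}}. -/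
open scoped Classical
open Finset

noncomputable section

/-- The leader's mixed-strategy simplex Δ_m. -/
def simplex (m : ℕ) : Set (Fin m → ℝ) := stdSimplex ℝ (Fin m)

/-- Linear extension of a payoff matrix to mixed strategies: u(x,j) = ∑ i, x i * u i j. -/
def pay {m n : ℕ} (u : Fin m → Fin n → ℝ) (x : Fin m → ℝ) (j : Fin n) : ℝ :=
  ∑ i, x i * u i j

/-- Inner product on ℝ^m. -/
def dot {m : ℕ} (a x : Fin m → ℝ) : ℝ := ∑ i, a i * x i

/-- min_{j ∈ S} u(x, j). -/
def minOnS {m n : ℕ} (u : Fin m → Fin n → ℝ) (S : Set (Fin n)) (x : Fin m → ℝ) : ℝ :=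
  sInf ((fun j => pay u x j) '' S)

/-- The leader's maximin value M_S = max_{x∈Δ_m} min_{j∈S} u(x,j). -/
def Mval {m n : ℕ} (u : Fin m → Fin n → ℝ) (S : Set (Fin n)) : ℝ :=
  sSup (minOnS u S '' simplex m)

/-- The set 𝓜_S of maximin strategies. -/
def argMM {m n : ℕ} (u : Fin m → Fin n → ℝ) (S : Set (Fin n)) : Set (Fin m → ℝ) :=
  {x ∈ simplex m | minOnS u S x = Mval u S}

/-- The follower's best-response set BR(x) = argmax_j uF(x,j). -/
def BR {m n : ℕ} (uF : Fin m → Fin n → ℝ) (x : Fin m → ℝ) : Set (Fin n) :=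
  {j | ∀ j', pay uF x j' ≤ pay uF x j}

/-- Strong Stackelberg equilibrium of the game (uL, uF). -/
def SSE {m n : ℕ} (uL uF : Fin m → Fin n → ℝ) (x : Fin m → ℝ) (j : Fin n) : Prop :=
  x ∈ simplex m ∧ j ∈ BR uF x ∧
    ∀ x' ∈ simplex m, ∀ j' ∈ BR uF x', pay uL x' j' ≤ pay uL x j

/-- (x, j) is inducible with respect to the leader payoff uL. -/
def Inducible {m n : ℕ} (uL : Fin m → Fin n → ℝ) (x : Fin m → ℝ) (j : Fin n) : Prop :=
  ∃ uF : Fin m → Fin n → ℝ, SSE uL uF x j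

/-- μ is a (maximin-)cover of S w.r.t. uL: max_{x∈𝓜_S} max_{j∈BR(x)} uL(x,j) < M_S. -/
def IsCover {m n : ℕ} (uL μ : Fin m → Fin n → ℝ) (S : Set (Fin n)) : Prop :=
  ∀ x ∈ argMM uL S, ∀ j ∈ BR μ x, pay uL x j < Mval uL S

/-- μ is a proper cover of S w.r.t. uL. -/
def IsProperCover {m n : ℕ} (uL μ : Fin m → Fin n → ℝ) (S : Set (Fin n)) : Prop :=
  IsCover uL μ S ∧ ∀ x ∈ simplex m, ∀ j ∈ S, j ∉ BR μ x

lemma pay_continuous {m n : ℕ} (u : Fin m → Fin n → ℝ) (j : Fin n) :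
    Continuous fun x : Fin m → ℝ => pay u x j := by
  unfold pay
  exact continuous_finset_sum _ fun i _ => (continuous_apply i).mul continuous_const

lemma pay_combo {m n : ℕ} (u : Fin m → Fin n → ℝ) (x y : Fin m → ℝ) (t : ℝ) (j : Fin n) :
    pay u ((1 - t) • x + t • y) j = (1 - t) * pay u x j + t * pay u y j := by
  simp [pay, Finset.mul_sum, ← Finset.sum_add_distrib, add_mul, mul_assoc]

lemma minOnS_single {m n : ℕ} (u : Fin m → Fin n → ℝ) (j : Fin n) :
    minOnS u {j} = fun x => pay u x j := by
  funext x; simp [minOnS]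

lemma minOnS_pair {m n : ℕ} (u : Fin m → Fin n → ℝ) (j1 j2 : Fin n) :
    minOnS u {j1, j2} = fun x => min (pay u x j1) (pay u x j2) := by
  funext x
  simp [minOnS, Set.image_pair, csInf_pair]

lemma simplex_nonempty {m : ℕ} (hm : 0 < m) : (simplex m).Nonempty :=
  ⟨Pi.single ⟨0, hm⟩ 1, single_mem_stdSimplex ℝ _⟩

lemma exists_max {m : ℕ} (hm : 0 < m) (f : (Fin m → ℝ) → ℝ) (hf : Continuous f) :
    ∃ x ∈ simplex m, IsGreatest (f '' simplex m) (f x) := by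
  obtain ⟨x, hx, hmax⟩ := (isCompact_stdSimplex ℝ (Fin m)).exists_isMaxOn
    (simplex_nonempty hm) hf.continuousOn
  exact ⟨x, hx, ⟨⟨x, hx, rfl⟩, by rintro v ⟨y, hy, rfl⟩; exact hmax hy⟩⟩

lemma exists_min {m : ℕ} (hm : 0 < m) (f : (Fin m → ℝ) → ℝ) (hf : Continuous f) :
    ∃ x ∈ simplex m, IsLeast (f '' simplex m) (f x) := by
  obtain ⟨x, hx, hmin⟩ := (isCompact_stdSimplex ℝ (Fin m)).exists_isMinOn
    (simplex_nonempty hm) hf.continuousOn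
  exact ⟨x, hx, ⟨⟨x, hx, rfl⟩, by rintro v ⟨y, hy, rfl⟩; exact hmin hy⟩⟩

/-- {x ∈ Δ_m : u^L(x,2) ≥ M_{1,2}} is nonempty and the maximum of u^L(·,1)
over it equals M_{1,2}; the maximum of u^L(·,2) over {x : u^L(x,2) ≤ M_{1,2}} also equals
M_{1,2}; and some x ∈ Δ_m has u^L(x,2) < M_{1,2}. (Actions 1, 2 are j1, j2.) -/
theorem first_reference_levels {m n : ℕ} (hm : 0 < m)
    (uL : Fin m → Fin n → ℝ) (j1 j2 : Fin n) (hj : j1 ≠ j2)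
    (hM : Mval uL {j1} ≤ Mval uL {j2})
    (hmin : sInf ((fun x => pay uL x j2) '' simplex m) < Mval uL {j1}) :
    ({x ∈ simplex m | Mval uL {j1, j2} ≤ pay uL x j2}).Nonempty ∧
    IsGreatest {v : ℝ | ∃ x ∈ simplex m, Mval uL {j1, j2} ≤ pay uL x j2 ∧ v = pay uL x j1}
      (Mval uL {j1, j2}) ∧
    IsGreatest {v : ℝ | ∃ x ∈ simplex m, pay uL x j2 ≤ Mval uL {j1, j2} ∧ v = pay uL x j2}
      (Mval uL {j1, j2}) ∧
    (∃ x ∈ simplex m, pay uL x j2 < Mval uL {j1, j2}) := by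
  -- maximizers
  obtain ⟨x1, hx1, hg1⟩ := exists_max hm _ (pay_continuous uL j1)
  obtain ⟨x2, hx2, hg2⟩ := exists_max hm _ (pay_continuous uL j2)
  obtain ⟨xs, hxs, hgs⟩ := exists_max hm
    (fun x => min (pay uL x j1) (pay uL x j2))
    ((pay_continuous uL j1).min (pay_continuous uL j2))
  obtain ⟨y, hy, hly⟩ := exists_min hm _ (pay_continuous uL j2)
  -- identify Mvals
  have hM1 : Mval uL {j1} = pay uL x1 j1 := by
    rw [Mval, minOnS_single]; exact hg1.csSup_eq
  have hM2 : Mval uL {j2} = pay uL x2 j2 := by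
    rw [Mval, minOnS_single]; exact hg2.csSup_eq
  have hM12 : Mval uL {j1, j2} = min (pay uL xs j1) (pay uL xs j2) := by
    rw [Mval, minOnS_pair]; exact hgs.csSup_eq
  have hs : sInf ((fun x => pay uL x j2) '' simplex m) = pay uL y j2 :=
    hly.csInf_eq
  set M1 := Mval uL {j1} with hM1d
  set M2 := Mval uL {j2} with hM2d
  set M12 := Mval uL {j1, j2} with hM12d
  set s := sInf ((fun x => pay uL x j2) '' simplex m) with hsd
  -- bounds
  have h1ub : ∀ x ∈ simplex m, pay uL x j1 ≤ M1 := by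
    intro x hx; rw [hM1]; exact hg1.2 ⟨x, hx, rfl⟩
  have h2ub : ∀ x ∈ simplex m, pay uL x j2 ≤ M2 := by
    intro x hx; rw [hM2]; exact hg2.2 ⟨x, hx, rfl⟩
  have h12ub : ∀ x ∈ simplex m, min (pay uL x j1) (pay uL x j2) ≤ M12 := by
    intro x hx; rw [hM12]; exact hgs.2 ⟨x, hx, rfl⟩
  have hslb : ∀ x ∈ simplex m, s ≤ pay uL x j2 := by
    intro x hx; rw [hs]; exact hly.2 ⟨x, hx, rfl⟩
  -- the mixing lemma
  have mix : ∀ x ∈ simplex m, ∀ z ∈ simplex m, M12 < pay uL x j1 →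
      M12 ≤ pay uL x j2 → M12 < pay uL z j2 → False := by
    intro x hx z hz h1 h2 h3
    set ε := pay uL x j1 - M12 with hε
    set c := pay uL z j1 with hc
    set t := min (1/2 : ℝ) (ε / (2 * max (pay uL x j1 - c) 1)) with ht
    have hεpos : 0 < ε := by simp [hε]; linarith
    have hmaxpos : (0:ℝ) < max (pay uL x j1 - c) 1 := lt_of_lt_of_le one_pos (le_max_right _ _)
    have htpos : 0 < t := lt_min one_half_pos (div_pos hεpos (by linarith))
    have ht1 : t ≤ 1 := le_trans (min_le_left _ _) (by norm_num)
    have hw : (1 - t) • x + t • z ∈ simplex m :=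
      (convex_stdSimplex ℝ (Fin m)) hx hz (by linarith) (le_of_lt htpos) (by ring)
    set w := (1 - t) • x + t • z with hwdef
    have hw1 : pay uL w j1 = (1 - t) * pay uL x j1 + t * pay uL z j1 := pay_combo ..
    have hw2 : pay uL w j2 = (1 - t) * pay uL x j2 + t * pay uL z j2 := pay_combo ..
    -- t * (pay x j1 - c) < ε
    have key : t * (pay uL x j1 - c) < ε := by
      rcases le_or_gt (pay uL x j1 - c) 0 with h | h
      · calc t * (pay uL x j1 - c) ≤ 0 := mul_nonpos_of_nonneg_of_nonpos (le_of_lt htpos) h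
          _ < ε := hεpos
      · have h1' : t ≤ ε / (2 * max (pay uL x j1 - c) 1) := min_le_right _ _
        have h2' : pay uL x j1 - c ≤ max (pay uL x j1 - c) 1 := le_max_left _ _
        calc t * (pay uL x j1 - c)
            ≤ (ε / (2 * max (pay uL x j1 - c) 1)) * (pay uL x j1 - c) := by
              apply mul_le_mul_of_nonneg_right h1' (le_of_lt h)
          _ ≤ (ε / (2 * max (pay uL x j1 - c) 1)) * max (pay uL x j1 - c) 1 := by
              apply mul_le_mul_of_nonneg_left h2'
              positivity
          _ = ε / 2 := by field_simp
          _ < ε := by linarith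
    have hw1' : M12 < pay uL w j1 := by rw [hw1]; simp only [hε] at key; nlinarith
    have hw2' : M12 < pay uL w j2 := by rw [hw2]; nlinarith
    have := h12ub w hw
    rw [min_def] at this
    split_ifs at this <;> linarith
  -- basic ordering facts
  have hpay1xs : min (pay uL xs j1) (pay uL xs j2) = M12 := hM12.symm
  have hM12leM1 : M12 ≤ M1 := by
    have := h1ub xs hxs
    have := min_le_left (pay uL xs j1) (pay uL xs j2)
    linarith
  -- s < M12
  have hsM12 : s < M12 := by
    by_contra h
    push_neg at h  -- M12 ≤ s
    have hx1j2 : M12 ≤ pay uL x1 j2 := le_trans h (hslb x1 hx1)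
    have hx1j1 : M12 < pay uL x1 j1 := by rw [← hM1]; exact lt_of_le_of_lt h hmin
    have hx2j2 : M12 < pay uL x2 j2 := by
      rw [← hM2]
      calc M12 ≤ s := h
        _ < M1 := hmin
        _ ≤ M2 := hM
    exact mix x1 hx1 x2 hx2 hx1j1 hx1j2 hx2j2
  -- key upper bound: pay x j2 ≥ M12 → pay x j1 ≤ M12
  have keyub : ∀ x ∈ simplex m, M12 ≤ pay uL x j2 → pay uL x j1 ≤ M12 := by
    intro x hx h2
    by_contra h1
    push_neg at h1
    rcases lt_or_ge M12 M2 with hlt | hle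
    · exact mix x hx x2 hx2 h1 h2 (hM2 ▸ hlt)
    · -- M2 ≤ M12 so M1 = M12, contradiction with pay x j1 > M12
      have := h1ub x hx
      linarith [hM]
  -- xs properties
  have hxs1 : M12 ≤ pay uL xs j1 := hpay1xs ▸ min_le_left _ _
  have hxs2 : M12 ≤ pay uL xs j2 := hpay1xs ▸ min_le_right _ _
  have hxs1' : pay uL xs j1 = M12 := le_antisymm (keyub xs hxs hxs2) hxs1
  refine ⟨⟨xs, hxs, hxs2⟩, ?_, ?_, ⟨y, hy, by rw [← hs]; exact hsM12⟩⟩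
  · exact ⟨⟨xs, hxs, hxs2, hxs1'.symm⟩, by
      rintro v ⟨x, hx, h2, rfl⟩; exact keyub x hx h2⟩
  · constructor
    · -- exists x with pay x j2 = M12 via IVT on segment y → xs
      have hys : pay uL y j2 < M12 := by rw [← hs]; exact hsM12
      set t := (M12 - pay uL y j2) / (pay uL xs j2 - pay uL y j2) with htd
      have hd : 0 < pay uL xs j2 - pay uL y j2 := by linarith
      have ht0 : 0 ≤ t := div_nonneg (by linarith) (le_of_lt hd)
      have ht1 : t ≤ 1 := by
        rw [div_le_one hd]; linarith
      have hw : (1 - t) • y + t • xs ∈ simplex m :=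
        (convex_stdSimplex ℝ (Fin m)) hy hxs (by linarith) ht0 (by ring)
      refine ⟨(1 - t) • y + t • xs, hw, ?_, ?_⟩ <;>
      · rw [pay_combo]
        have : t * (pay uL xs j2 - pay uL y j2) = M12 - pay uL y j2 := by
          rw [htd]; field_simp
        nlinarith
    · rintro v ⟨x, hx, h2, rfl⟩; exact h2
end
end

section
/- Assume n ≥ 2, M_{{1}} ≤ M_{{2}}, min_{x∈Δ_m} u^L(x,2) < M_{{1}}, and that there are a_2 ∈ ℝ^m, γ_2 > 0, β_2 ∈ ℝ with u^L(x,2) = γ_2·(a_2·x) + β_2 for all x ∈ Δ_m. Set d* = (M_{{1,2}} − β_2)/γ_2. For d ∈ ℝ define the follower payoff ũ_d^F(x,j) = −1 for j ∉ {1,2}, ũ_d^F(x,1) = 0, and ũ_d^F(x,2) = d − a_2·x, and let 𝒢_d = (u^L, ũ_d^F). Then action 1 is an SSE response of 𝒢_d if and only if d ≤ d*, and action 2 is an SSE response of 𝒢_d if and only if d ≥ d*. -/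
open scoped Classical
open Finset

noncomputable section

/-- The parameterized follower payoff ũ_d^F: 0 on column 1, d − a_2·x on column 2, −1
elsewhere (as a matrix; the linear extension agrees on Δ_m). -/
def uFd {m n : ℕ} (j1 j2 : Fin n) (a2 : Fin m → ℝ) (d : ℝ) : Fin m → Fin n → ℝ :=
  fun i j => if j = j1 then 0 else if j = j2 then d - a2 i else -1

/-- j is an SSE response of the game (uL, uF). -/
def SSEResp {m n : ℕ} (uL uF : Fin m → Fin n → ℝ) (j : Fin n) : Prop :=
  ∃ x : Fin m → ℝ, SSE uL uF x j

lemma dot_continuous {m : ℕ} (a : Fin m → ℝ) :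
    Continuous fun x : Fin m → ℝ => dot a x := by
  unfold dot
  exact continuous_finset_sum _ fun i _ => continuous_const.mul (continuous_apply i)

lemma pay_comb {m n : ℕ} (u : Fin m → Fin n → ℝ) (x y : Fin m → ℝ) (a b : ℝ) (j : Fin n) :
    pay u (a • x + b • y) j = a * pay u x j + b * pay u y j := by
  simp [pay, Finset.mul_sum, add_mul, mul_assoc, Finset.sum_add_distrib]

lemma minOn_singleton {m n : ℕ} (u : Fin m → Fin n → ℝ) (j : Fin n) (x : Fin m → ℝ) :
    minOnS u {j} x = pay u x j := by
  simp [minOnS]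

lemma minOn_pair {m n : ℕ} (u : Fin m → Fin n → ℝ) (j1 j2 : Fin n) (x : Fin m → ℝ) :
    minOnS u {j1, j2} x = min (pay u x j1) (pay u x j2) := by
  rw [minOnS, Set.image_pair, csInf_pair]

lemma pay_uFd_j1 {m n : ℕ} (j1 j2 : Fin n) (a2 : Fin m → ℝ) (d : ℝ) (x : Fin m → ℝ) :
    pay (uFd j1 j2 a2 d) x j1 = 0 := by
  simp [pay, uFd]

lemma pay_uFd_j2 {m n : ℕ} {j1 j2 : Fin n} (hj : j1 ≠ j2) (a2 : Fin m → ℝ) (d : ℝ)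
    {x : Fin m → ℝ} (hx : x ∈ simplex m) :
    pay (uFd j1 j2 a2 d) x j2 = d - dot a2 x := by
  have h1 : pay (uFd j1 j2 a2 d) x j2 = ∑ i, x i * (d - a2 i) := by
    simp [pay, uFd, hj.symm]
  have h2 : ∑ i, x i * (d - a2 i) = (∑ i, x i) * d - ∑ i, a2 i * x i := by
    rw [Finset.sum_mul, ← Finset.sum_sub_distrib]
    exact Finset.sum_congr rfl fun i _ => by ring
  rw [h1, h2, hx.2, one_mul, dot]

lemma pay_uFd_other {m n : ℕ} {j1 j2 j : Fin n} (h1 : j ≠ j1) (h2 : j ≠ j2)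
    (a2 : Fin m → ℝ) (d : ℝ) {x : Fin m → ℝ} (hx : x ∈ simplex m) :
    pay (uFd j1 j2 a2 d) x j = -1 := by
  have : pay (uFd j1 j2 a2 d) x j = ∑ i, x i * (-1 : ℝ) := by
    simp [pay, uFd, h1, h2]
  have h2 : ∑ i, x i * (-1:ℝ) = -∑ i, x i := by
    rw [← Finset.sum_neg_distrib]
    exact Finset.sum_congr rfl fun i _ => by ring
  rw [this, h2, hx.2]

lemma mem_BR_j1_iff {m n : ℕ} {j1 j2 : Fin n} (hj : j1 ≠ j2) (a2 : Fin m → ℝ) (d : ℝ)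
    {x : Fin m → ℝ} (hx : x ∈ simplex m) :
    j1 ∈ BR (uFd j1 j2 a2 d) x ↔ d ≤ dot a2 x := by
  constructor
  · intro h
    have := h j2
    rw [pay_uFd_j1, pay_uFd_j2 hj a2 d hx] at this
    linarith
  · intro hd j'
    rw [pay_uFd_j1]
    by_cases h1 : j' = j1
    · rw [h1, pay_uFd_j1]
    by_cases h2 : j' = j2
    · rw [h2, pay_uFd_j2 hj a2 d hx]; linarith
    · rw [pay_uFd_other h1 h2 a2 d hx]; linarith

lemma mem_BR_j2_iff {m n : ℕ} {j1 j2 : Fin n} (hj : j1 ≠ j2) (a2 : Fin m → ℝ) (d : ℝ)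
    {x : Fin m → ℝ} (hx : x ∈ simplex m) :
    j2 ∈ BR (uFd j1 j2 a2 d) x ↔ dot a2 x ≤ d := by
  constructor
  · intro h
    have := h j1
    rw [pay_uFd_j1, pay_uFd_j2 hj a2 d hx] at this
    linarith
  · intro hd j'
    rw [pay_uFd_j2 hj a2 d hx]
    by_cases h1 : j' = j1
    · rw [h1, pay_uFd_j1]; linarith
    by_cases h2 : j' = j2
    · rw [h2, pay_uFd_j2 hj a2 d hx]
    · rw [pay_uFd_other h1 h2 a2 d hx]; linarith

lemma not_mem_BR_other {m n : ℕ} {j1 j2 j : Fin n} (h1 : j ≠ j1) (h2 : j ≠ j2)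
    (a2 : Fin m → ℝ) (d : ℝ) {x : Fin m → ℝ} (hx : x ∈ simplex m) :
    j ∉ BR (uFd j1 j2 a2 d) x := by
  intro h
  have := h j1
  rw [pay_uFd_j1, pay_uFd_other h1 h2 a2 d hx] at this
  linarith

/-- Mixing lemma: if f1(x) > r, f2(x) ≥ r, f2(y) > r then some convex combination z of x
and y satisfies f1(z) > r and f2(z) > r. -/
lemma mix_lemma {m n : ℕ} (uL : Fin m → Fin n → ℝ) (j1 j2 : Fin n) (r : ℝ)
    {x y : Fin m → ℝ} (hx : x ∈ simplex m) (hy : y ∈ simplex m)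
    (h1 : r < pay uL x j1) (h2 : r ≤ pay uL x j2) (h3 : r < pay uL y j2) :
    ∃ z ∈ simplex m, r < pay uL z j1 ∧ r < pay uL z j2 := by
  set A1 := pay uL x j1 with hA1
  set B1 := pay uL y j1 with hB1
  set A2 := pay uL x j2 with hA2
  set B2 := pay uL y j2 with hB2
  set c : ℝ := A1 - r with hc
  set e : ℝ := max (A1 - B1) 0 with he
  have hcpos : 0 < c := by simp only [hc]; linarith
  have hepos : 0 ≤ e := le_max_right _ _
  set t : ℝ := c / (2 * (c + e)) with ht
  have hden : (0:ℝ) < 2 * (c + e) := by linarith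
  have htpos : 0 < t := div_pos hcpos hden
  have hkey : t * (2 * (c + e)) = c := div_mul_cancel₀ _ (ne_of_gt hden)
  have ht1 : t ≤ 1/2 := by nlinarith
  have hte : t * e ≤ c / 2 := by nlinarith
  have htlt : t * (A1 - B1) ≤ t * e :=
    mul_le_mul_of_nonneg_left (le_max_left _ _) htpos.le
  refine ⟨(1 - t) • x + t • y, ?_, ?_, ?_⟩
  · exact convex_stdSimplex ℝ (Fin m) hx hy (by linarith) htpos.le (by ring)
  · rw [pay_comb, ← hA1, ← hB1]
    nlinarith
  · rw [pay_comb, ← hA2, ← hB2]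
    nlinarith [mul_le_mul_of_nonneg_left h2 (by linarith : (0:ℝ) ≤ 1 - t),
      mul_lt_mul_of_pos_left h3 htpos]

/-- Intermediate value lemma for a linear payoff on the simplex. -/
lemma iv_lemma {m n : ℕ} (uL : Fin m → Fin n → ℝ) (j2 : Fin n)
    {x y : Fin m → ℝ} (hx : x ∈ simplex m) (hy : y ∈ simplex m) (v : ℝ)
    (h1 : pay uL x j2 ≤ v) (h2 : v ≤ pay uL y j2) :
    ∃ z ∈ simplex m, pay uL z j2 = v := by
  set A := pay uL x j2 with hA
  set B := pay uL y j2 with hB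
  rcases eq_or_lt_of_le (h1.trans h2 : A ≤ B) with hAB | hAB
  · exact ⟨x, hx, le_antisymm h1 (by rw [← hA, hAB]; exact h2)⟩
  · set t : ℝ := (v - A) / (B - A) with ht
    have ht0 : 0 ≤ t := div_nonneg (by linarith) (by linarith)
    have ht1 : t ≤ 1 := by
      rw [ht, div_le_one (by linarith)]; linarith
    have hmul : t * (B - A) = v - A := div_mul_cancel₀ _ (by linarith : B - A ≠ 0)
    refine ⟨(1 - t) • x + t • y,
      convex_stdSimplex ℝ (Fin m) hx hy (by linarith) ht0 (by ring), ?_⟩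
    rw [pay_comb, ← hA, ← hB]
    linarith [hmul]

/-- action 1 is an SSE response of 𝒢_d iff d ≤ d*, and action 2 is an SSE
response of 𝒢_d iff d ≥ d*, where d* = (M_{1,2} − β_2)/γ_2. -/
theorem fd_sse_responses {m n : ℕ} (hm : 0 < m)
    (uL : Fin m → Fin n → ℝ) (j1 j2 : Fin n) (hj : j1 ≠ j2)
    (hM : Mval uL {j1} ≤ Mval uL {j2})
    (hmin : sInf ((fun x => pay uL x j2) '' simplex m) < Mval uL {j1})
    (a2 : Fin m → ℝ) (γ2 : ℝ) (hγ2 : 0 < γ2) (β2 : ℝ)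
    (ha2 : ∀ x ∈ simplex m, pay uL x j2 = γ2 * dot a2 x + β2)
    (d : ℝ) :
    (SSEResp uL (uFd j1 j2 a2 d) j1 ↔ d ≤ (Mval uL {j1, j2} - β2) / γ2) ∧
    (SSEResp uL (uFd j1 j2 a2 d) j2 ↔ (Mval uL {j1, j2} - β2) / γ2 ≤ d) := by
  have hΔc : IsCompact (simplex m) := isCompact_stdSimplex ℝ (Fin m)
  have hΔne : (simplex m).Nonempty := ⟨Pi.single ⟨0, hm⟩ 1, single_mem_stdSimplex ℝ _⟩
  have hc1 : Continuous fun x : Fin m → ℝ => pay uL x j1 := pay_continuous uL j1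
  have hc2 : Continuous fun x : Fin m → ℝ => pay uL x j2 := pay_continuous uL j2
  have hcmin : Continuous fun x : Fin m → ℝ => min (pay uL x j1) (pay uL x j2) :=
    hc1.min hc2
  obtain ⟨xs, hxsΔ, hxs_eq, hxs_ge⟩ :=
    hΔc.exists_sSup_image_eq_and_ge hΔne hcmin.continuousOn
  obtain ⟨x1, hx1Δ, hx1_eq, hx1_ge⟩ :=
    hΔc.exists_sSup_image_eq_and_ge hΔne hc1.continuousOn
  obtain ⟨x2, hx2Δ, hx2_eq, hx2_ge⟩ :=
    hΔc.exists_sSup_image_eq_and_ge hΔne hc2.continuousOn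
  obtain ⟨xm, hxmΔ, hxm_eq, hxm_le⟩ :=
    hΔc.exists_sInf_image_eq_and_le hΔne hc2.continuousOn
  -- identify the Mvals
  have hMv1 : Mval uL {j1} = pay uL x1 j1 := by
    rw [Mval, show minOnS uL {j1} = fun x => pay uL x j1 from
      funext fun x => minOn_singleton uL j1 x]
    exact hx1_eq
  have hMv2 : Mval uL {j2} = pay uL x2 j2 := by
    rw [Mval, show minOnS uL {j2} = fun x => pay uL x j2 from
      funext fun x => minOn_singleton uL j2 x]
    exact hx2_eq
  have hMv12 : Mval uL {j1, j2} = min (pay uL xs j1) (pay uL xs j2) := by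
    rw [Mval, show minOnS uL {j1, j2} = fun x => min (pay uL x j1) (pay uL x j2) from
      funext fun x => minOn_pair uL j1 j2 x]
    exact hxs_eq
  set M12 : ℝ := Mval uL {j1, j2} with hM12def
  set M1 : ℝ := pay uL x1 j1 with hM1def
  set M2 : ℝ := pay uL x2 j2 with hM2def
  set m2 : ℝ := pay uL xm j2 with hm2def
  rw [hMv1, hMv2] at hM
  rw [hMv1, hxm_eq] at hmin
  -- basic inequalities
  have hM12_le1 : M12 ≤ pay uL xs j1 := by rw [hMv12]; exact min_le_left _ _
  have hM12_le2 : M12 ≤ pay uL xs j2 := by rw [hMv12]; exact min_le_right _ _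
  have hM12_le_M1 : M12 ≤ M1 := hM12_le1.trans (hx1_ge xs hxsΔ)
  -- m2 < M12
  have hm2_lt_M12 : m2 < M12 := by
    obtain ⟨z, hzΔ, hz1, hz2⟩ := mix_lemma uL j1 j2 m2 hx1Δ hx2Δ hmin
      (hxm_le x1 hx1Δ) (lt_of_lt_of_le hmin hM)
    have : min (pay uL z j1) (pay uL z j2) ≤ M12 := by
      rw [hMv12]; exact hxs_ge z hzΔ
    have hmn : m2 < min (pay uL z j1) (pay uL z j2) := lt_min hz1 hz2
    linarith
  -- Lemma K
  have lemK : ∀ x ∈ simplex m, M12 ≤ pay uL x j2 → pay uL x j1 ≤ M12 := by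
    intro x hxΔ hge
    by_contra hcon
    push_neg at hcon
    rcases le_or_gt M2 M12 with hc | hc
    · have := hx1_ge x hxΔ
      linarith
    · obtain ⟨z, hzΔ, hz1, hz2⟩ := mix_lemma uL j1 j2 M12 hxΔ hx2Δ hcon hge hc
      have : min (pay uL z j1) (pay uL z j2) ≤ M12 := by
        rw [hMv12]; exact hxs_ge z hzΔ
      have hmn : M12 < min (pay uL z j1) (pay uL z j2) := lt_min hz1 hz2
      linarith
  -- translation between d* comparisons and payoff comparisons
  have hd_le : ∀ c : ℝ, c ≤ (M12 - β2) / γ2 ↔ γ2 * c + β2 ≤ M12 := by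
    intro c
    rw [le_div_iff₀ hγ2]
    constructor <;> intro h <;> nlinarith
  have hd_ge : ∀ c : ℝ, (M12 - β2) / γ2 ≤ c ↔ M12 ≤ γ2 * c + β2 := by
    intro c
    rw [div_le_iff₀ hγ2]
    constructor <;> intro h <;> nlinarith
  constructor
  · -- j1 is SSE response ↔ d ≤ d*
    constructor
    · rintro ⟨x, hxΔ, hxBR, hxopt⟩
      rw [hd_le]
      by_contra hcon
      push_neg at hcon
      have hgx : d ≤ dot a2 x := (mem_BR_j1_iff hj a2 d hxΔ).mp hxBR
      have hf2x : γ2 * d + β2 ≤ pay uL x j2 := by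
        rw [ha2 x hxΔ]; nlinarith
      have hf1x : pay uL x j1 ≤ M12 := lemK x hxΔ (by linarith)
      have hle2 : γ2 * d + β2 ≤ M2 := le_trans hf2x (hx2_ge x hxΔ)
      set v : ℝ := (M12 + (γ2 * d + β2)) / 2 with hv
      obtain ⟨z, hzΔ, hzv⟩ := iv_lemma uL j2 hxmΔ hx2Δ v (by rw [← hm2def]; linarith)
        (by rw [← hM2def]; linarith)
      have hgz : dot a2 z ≤ d := by
        rw [ha2 z hzΔ] at hzv; nlinarith
      have hzBR : j2 ∈ BR (uFd j1 j2 a2 d) z := (mem_BR_j2_iff hj a2 d hzΔ).mpr hgz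
      have := hxopt z hzΔ j2 hzBR
      rw [hzv] at this
      linarith
    · intro hd
      rw [hd_le] at hd
      -- maximize pay · j1 over A := Δ ∩ {x | d ≤ dot a2 x}
      have hAclosed : IsClosed {x : Fin m → ℝ | d ≤ dot a2 x} :=
        isClosed_le continuous_const (dot_continuous a2)
      have hAc : IsCompact (simplex m ∩ {x | d ≤ dot a2 x}) :=
        hΔc.inter_right hAclosed
      have hxsA : xs ∈ simplex m ∩ {x | d ≤ dot a2 x} := by
        refine ⟨hxsΔ, ?_⟩
        have := ha2 xs hxsΔ
        simp only [Set.mem_setOf_eq]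
        nlinarith
      obtain ⟨xh, hxhA, _, hxh_ge⟩ :=
        hAc.exists_sSup_image_eq_and_ge ⟨xs, hxsA⟩ hc1.continuousOn
      refine ⟨xh, hxhA.1, (mem_BR_j1_iff hj a2 d hxhA.1).mpr hxhA.2, ?_⟩
      intro x' hx' j' hj'
      by_cases h1 : j' = j1
      · rw [h1] at hj' ⊢
        have hgx' : d ≤ dot a2 x' := (mem_BR_j1_iff hj a2 d hx').mp hj'
        exact hxh_ge x' ⟨hx', hgx'⟩
      by_cases h2 : j' = j2
      · rw [h2] at hj' ⊢
        have hgx' : dot a2 x' ≤ d := (mem_BR_j2_iff hj a2 d hx').mp hj'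
        have hf2x' : pay uL x' j2 ≤ γ2 * d + β2 := by
          rw [ha2 x' hx']; nlinarith
        have hxhM1 : M12 ≤ pay uL xh j1 := hM12_le1.trans (hxh_ge xs hxsA)
        linarith
      · exact absurd hj' (not_mem_BR_other h1 h2 a2 d hx')
  · -- j2 is SSE response ↔ d* ≤ d
    constructor
    · rintro ⟨x, hxΔ, hxBR, hxopt⟩
      rw [hd_ge]
      by_contra hcon
      push_neg at hcon
      have hgx : dot a2 x ≤ d := (mem_BR_j2_iff hj a2 d hxΔ).mp hxBR
      have hf2x : pay uL x j2 ≤ γ2 * d + β2 := by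
        rw [ha2 x hxΔ]
        have := mul_le_mul_of_nonneg_left hgx hγ2.le
        linarith
      have hgxs : d ≤ dot a2 xs := by
        have heq := ha2 xs hxsΔ
        have hlt : γ2 * d < γ2 * dot a2 xs := by linarith
        exact ((mul_lt_mul_iff_right₀ hγ2).mp hlt).le
      have hxsBR : j1 ∈ BR (uFd j1 j2 a2 d) xs := (mem_BR_j1_iff hj a2 d hxsΔ).mpr hgxs
      have := hxopt xs hxsΔ j1 hxsBR
      linarith
    · intro hd
      rw [hd_ge] at hd
      have hBclosed : IsClosed {x : Fin m → ℝ | dot a2 x ≤ d} :=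
        isClosed_le (dot_continuous a2) continuous_const
      have hBc : IsCompact (simplex m ∩ {x | dot a2 x ≤ d}) :=
        hΔc.inter_right hBclosed
      have hxmB : xm ∈ simplex m ∩ {x | dot a2 x ≤ d} := by
        refine ⟨hxmΔ, ?_⟩
        have heq := ha2 xm hxmΔ
        simp only [Set.mem_setOf_eq]
        have hlt : γ2 * dot a2 xm < γ2 * d := by linarith
        exact ((mul_lt_mul_iff_right₀ hγ2).mp hlt).le
      obtain ⟨xh, hxhB, _, hxh_ge⟩ :=
        hBc.exists_sSup_image_eq_and_ge ⟨xm, hxmB⟩ hc2.continuousOn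
      -- M12 ≤ pay uL xh j2
      have hxhM : M12 ≤ pay uL xh j2 := by
        rcases le_or_gt (pay uL xs j2) (γ2 * d + β2) with hcase | hcase
        · have hgxs : dot a2 xs ≤ d := by
            have heq := ha2 xs hxsΔ
            have hle : γ2 * dot a2 xs ≤ γ2 * d := by linarith
            exact (mul_le_mul_iff_right₀ hγ2).mp hle
          exact hM12_le2.trans (hxh_ge xs ⟨hxsΔ, hgxs⟩)
        · obtain ⟨z, hzΔ, hzv⟩ := iv_lemma uL j2 hxmΔ hxsΔ (γ2 * d + β2)
            (by rw [← hm2def]; linarith) hcase.le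
          have hgz : dot a2 z ≤ d := by
            rw [ha2 z hzΔ] at hzv
            have hle : γ2 * dot a2 z ≤ γ2 * d := by linarith
            exact (mul_le_mul_iff_right₀ hγ2).mp hle
          have := hxh_ge z ⟨hzΔ, hgz⟩
          linarith [this, hzv.ge, hd]
      refine ⟨xh, hxhB.1, (mem_BR_j2_iff hj a2 d hxhB.1).mpr hxhB.2, ?_⟩
      intro x' hx' j' hj'
      by_cases h1 : j' = j1
      · rw [h1] at hj' ⊢
        have hgx' : d ≤ dot a2 x' := (mem_BR_j1_iff hj a2 d hx').mp hj'
        have hf2x' : M12 ≤ pay uL x' j2 := by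
          rw [ha2 x' hx']
          have := mul_le_mul_of_nonneg_left hgx' hγ2.le
          linarith
        have hK := lemK x' hx' hf2x'
        linarith
      by_cases h2 : j' = j2
      · rw [h2] at hj' ⊢
        have hgx' : dot a2 x' ≤ d := (mem_BR_j2_iff hj a2 d hx').mp hj'
        exact hxh_ge x' ⟨hx', hgx'⟩
      · exact absurd hj' (not_mem_BR_other h1 h2 a2 d hx')
end
end

section
/- Assume n ≥ 2, M_{{1}} ≤ M_{{2}}, min_{x∈Δ_m} u^L(x,2) < M_{{1}}, and that for j ∈ {1,2} there are a_j ∈ ℝ^m, γ_j > 0, β_j ∈ ℝ with u^L(x,j) = γ_j·(a_j·x) + β_j for all x ∈ Δ_m. Set d_j* = (M_{{1,2}} − β_j)/γ_j for j ∈ {1,2}, and for d₁, d₂ ∈ ℝ define P₁(d₁,d₂) = {x ∈ Δ_m : a_2·x ≥ d₂ and a_1·x ≤ d₁} and P₂(d₁,d₂) = {x ∈ Δ_m : a_2·x ≤ d₂}. If d₁ ≤ d₁* and d₂ ≤ d₂*, then for each j ∈ {1,2}, if P_j(d₁,d₂) ≠ ∅ then max_{x ∈ P_j(d₁,d₂)}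 u^L(x,j) = γ_j·d_j + β_j. -/
open scoped Classical
open Finset

noncomputable section

/-- P₁(d₁,d₂) = {x ∈ Δ_m : a₂·x ≥ d₂ and a₁·x ≤ d₁}. -/
def P1 {m : ℕ} (a1 a2 : Fin m → ℝ) (d1 d2 : ℝ) : Set (Fin m → ℝ) :=
  {x ∈ simplex m | d2 ≤ dot a2 x ∧ dot a1 x ≤ d1}

/-- P₂(d₁,d₂) = {x ∈ Δ_m : a₂·x ≤ d₂}. -/
def P2 {m : ℕ} (a2 : Fin m → ℝ) (d2 : ℝ) : Set (Fin m → ℝ) :=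
  {x ∈ simplex m | dot a2 x ≤ d2}

lemma dot_comb {m : ℕ} (a y x : Fin m → ℝ) (s t : ℝ) :
    dot a (s • y + t • x) = s * dot a y + t * dot a x := by
  simp only [dot, Pi.add_apply, Pi.smul_apply, smul_eq_mul, mul_add, Finset.sum_add_distrib,
    Finset.mul_sum]
  congr 1 <;> exact Finset.sum_congr rfl (fun i _ => by ring)

lemma exists_maximin {m n : ℕ} (u : Fin m → Fin n → ℝ) (j1 j2 : Fin n)
    (hne : (simplex m).Nonempty) :
    ∃ x ∈ simplex m, Mval u {j1, j2} ≤ pay u x j1 ∧ Mval u {j1, j2} ≤ pay u x j2 := by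
  have hminOn : ∀ x, minOnS u {j1, j2} x = min (pay u x j1) (pay u x j2) := by
    intro x
    rw [minOnS, Set.image_pair, csInf_pair]
  have hpaycont : ∀ j : Fin n, Continuous fun x : Fin m → ℝ => pay u x j := by
    intro j
    exact continuous_finset_sum _ fun i _ => (continuous_apply i).mul continuous_const
  have hcont : Continuous (minOnS u {j1, j2}) := by
    have : Continuous fun x : Fin m → ℝ => min (pay u x j1) (pay u x j2) :=
      (hpaycont j1).min (hpaycont j2)
    simpa [funext hminOn] using this
  obtain ⟨x, hx, hmax⟩ := (isCompact_stdSimplex ℝ (Fin m)).exists_isMaxOn hne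
    hcont.continuousOn
  have hM : Mval u {j1, j2} = minOnS u {j1, j2} x := by
    refine IsGreatest.csSup_eq ⟨⟨x, hx, rfl⟩, ?_⟩
    rintro v ⟨y, hy, rfl⟩
    exact hmax hy
  refine ⟨x, hx, ?_, ?_⟩
  · rw [hM, hminOn]; exact min_le_left _ _
  · rw [hM, hminOn]; exact min_le_right _ _

/-- for d₁ ≤ d₁* and d₂ ≤ d₂*, if P_j(d₁,d₂) ≠ ∅ then
max_{x∈P_j(d₁,d₂)} u^L(x,j) = γ_j·d_j + β_j (j ∈ {1,2}; actions 1, 2 are j1, j2). -/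
theorem max_on_Pj {m n : ℕ} (hm : 0 < m)
    (uL : Fin m → Fin n → ℝ) (j1 j2 : Fin n) (hj : j1 ≠ j2)
    (hM : Mval uL {j1} ≤ Mval uL {j2})
    (hmin : sInf ((fun x => pay uL x j2) '' simplex m) < Mval uL {j1})
    (a1 a2 : Fin m → ℝ) (γ1 γ2 : ℝ) (hγ1 : 0 < γ1) (hγ2 : 0 < γ2) (β1 β2 : ℝ)
    (h1 : ∀ x ∈ simplex m, pay uL x j1 = γ1 * dot a1 x + β1)
    (h2 : ∀ x ∈ simplex m, pay uL x j2 = γ2 * dot a2 x + β2)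
    (d1 d2 : ℝ)
    (hd1 : d1 ≤ (Mval uL {j1, j2} - β1) / γ1)
    (hd2 : d2 ≤ (Mval uL {j1, j2} - β2) / γ2) :
    ((P1 a1 a2 d1 d2).Nonempty →
      IsGreatest {v : ℝ | ∃ x ∈ P1 a1 a2 d1 d2, v = pay uL x j1} (γ1 * d1 + β1)) ∧
    ((P2 a2 d2).Nonempty →
      IsGreatest {v : ℝ | ∃ x ∈ P2 a2 d2, v = pay uL x j2} (γ2 * d2 + β2)) := by
  constructor
  · rintro ⟨y, hys, hy2, hy1⟩
    obtain ⟨x, hxs, hp1, hp2⟩ := exists_maximin uL j1 j2 ⟨y, hys⟩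
    have hq1 : Mval uL {j1, j2} ≤ γ1 * dot a1 x + β1 := by rw [← h1 x hxs]; exact hp1
    have hq2 : Mval uL {j1, j2} ≤ γ2 * dot a2 x + β2 := by rw [← h2 x hxs]; exact hp2
    have hx1 : d1 ≤ dot a1 x := by
      refine hd1.trans ?_
      rw [div_le_iff₀ hγ1]
      nlinarith
    have hx2 : d2 ≤ dot a2 x := by
      refine hd2.trans ?_
      rw [div_le_iff₀ hγ2]
      nlinarith
    have hseg : d1 ∈ segment ℝ (dot a1 y) (dot a1 x) := by
      rw [segment_eq_Icc (hy1.trans hx1)]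
      exact ⟨hy1, hx1⟩
    obtain ⟨s, t, hs, ht, hst, heq⟩ := hseg
    set z := s • y + t • x with hzdef
    have hzs : z ∈ simplex m := (convex_stdSimplex ℝ (Fin m)) hys hxs hs ht hst
    have hz1 : dot a1 z = d1 := by
      rw [hzdef, dot_comb]
      simpa [smul_eq_mul] using heq
    have hz2 : d2 ≤ dot a2 z := by
      rw [hzdef, dot_comb]
      have e : s * d2 + t * d2 = d2 := by rw [← add_mul, hst, one_mul]
      nlinarith [mul_le_mul_of_nonneg_left hy2 hs, mul_le_mul_of_nonneg_left hx2 ht]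
    refine ⟨⟨z, ⟨hzs, hz2, hz1.le⟩, by rw [h1 z hzs, hz1]⟩, ?_⟩
    rintro v ⟨w, ⟨hws, hw2, hw1⟩, rfl⟩
    rw [h1 w hws]
    nlinarith [mul_le_mul_of_nonneg_left hw1 hγ1.le]
  · rintro ⟨y, hys, hy2⟩
    obtain ⟨x, hxs, hp1, hp2⟩ := exists_maximin uL j1 j2 ⟨y, hys⟩
    have hq2 : Mval uL {j1, j2} ≤ γ2 * dot a2 x + β2 := by rw [← h2 x hxs]; exact hp2
    have hx2 : d2 ≤ dot a2 x := by
      refine hd2.trans ?_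
      rw [div_le_iff₀ hγ2]
      nlinarith
    have hseg : d2 ∈ segment ℝ (dot a2 y) (dot a2 x) := by
      rw [segment_eq_Icc (hy2.trans hx2)]
      exact ⟨hy2, hx2⟩
    obtain ⟨s, t, hs, ht, hst, heq⟩ := hseg
    set z := s • y + t • x with hzdef
    have hzs : z ∈ simplex m := (convex_stdSimplex ℝ (Fin m)) hys hxs hs ht hst
    have hz2 : dot a2 z = d2 := by
      rw [hzdef, dot_comb]
      simpa [smul_eq_mul] using heq
    refine ⟨⟨z, ⟨hzs, hz2.le⟩, by rw [h2 z hzs, hz2]⟩, ?_⟩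
    rintro v ⟨w, ⟨hws, hw2⟩, rfl⟩
    rw [h2 w hws]
    nlinarith [mul_le_mul_of_nonneg_left hw2 hγ2.le]
end
end
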